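/- Let R be a finite commutative ring in which every finite set of zero divisors has a common nonzero annihilator. Then the directed zero divisor graph of M_n(R) (n ≥ 2) has diameter at most 2. -/

import Mathlib

open Matrix

/-- If R is a finite commutative ring in which every finite set of zero divisors has a common
nonzero annihilator, then the directed zero divisor graph of M_n(R), n ≥ 2, has diameter at
most 2: any two distinct nonzero zero divisors X, Y not joined by an edge are joined by a
directed path of length 2. -/
theorem matrix_ring_diameter_le_two (R : Type*) [CommRing R] [Fintype R] (n : ℕ) (hn : 2 ≤ n)
    (h : ∀ S : Finset R, (∀ s ∈ S, ∃ t : R, t ≠ 0 ∧ s * t = 0) →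
      ∃ a : R, a ≠ 0 ∧ ∀ s ∈ S, a * s = 0) :
    ∀ X Y : Matrix (Fin n) (Fin n) R,
      (X ≠ 0 ∧ ∃ W : Matrix (Fin n) (Fin n) R, W ≠ 0 ∧ (X * W = 0 ∨ W * X = 0)) →
      (Y ≠ 0 ∧ ∃ W : Matrix (Fin n) (Fin n) R, W ≠ 0 ∧ (Y * W = 0 ∨ W * Y = 0)) →
      X ≠ Y → X * Y ≠ 0 →
      ∃ Z : Matrix (Fin n) (Fin n) R, Z ≠ 0 ∧ X * Z = 0 ∧ Z * Y = 0 := by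
  classical
  intro X Y hX hY _hne _hmul
  -- a common nonzero annihilator `a` of all zero-divisors of `R`
  obtain ⟨a, ha0, ha⟩ := h (Finset.univ.filter (fun s => ∃ t : R, t ≠ 0 ∧ s * t = 0))
    (by intro s hs; exact (Finset.mem_filter.mp hs).2)
  have haZ : ∀ s : R, (∃ t : R, t ≠ 0 ∧ s * t = 0) → a * s = 0 := fun s hs =>
    ha s (Finset.mem_filter.mpr ⟨Finset.mem_univ _, hs⟩)
  -- the ideal of elements annihilated by `a`
  let m : Ideal R :=
    { carrier := {x | a * x = 0}
      add_mem' := by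
        intro x y hx hy
        simp only [Set.mem_setOf_eq] at *
        rw [mul_add, hx, hy, add_zero]
      zero_mem' := by simp
      smul_mem' := by
        intro c x hx
        simp only [smul_eq_mul, Set.mem_setOf_eq] at *
        rw [mul_comm c x, ← mul_assoc, hx, zero_mul] }
  have mem_m : ∀ x : R, x ∈ m ↔ a * x = 0 := fun x => Iff.rfl
  -- every element outside m is a unit
  have unit_of_not_mem : ∀ x : R, x ∉ m → IsUnit x := by
    intro x hx
    by_contra hu
    have hzd : ∃ t : R, t ≠ 0 ∧ x * t = 0 := by
      by_contra hreg
      push_neg at hreg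
      have hinj : Function.Injective (fun t : R => x * t) := by
        intro s t hst
        have h0 : x * (s - t) = 0 := by
          simp only at hst
          rw [mul_sub, hst, sub_self]
        by_contra hne
        exact hreg (s - t) (sub_ne_zero.mpr hne) h0
      obtain ⟨t, ht⟩ := Finite.injective_iff_surjective.mp hinj 1
      exact hu (IsUnit.of_mul_eq_one t ht)
    exact hx ((mem_m x).mpr (haZ x hzd))
  -- m is maximal
  have hm_max : m.IsMaximal := by
    rw [Ideal.isMaximal_iff]
    refine ⟨fun h1 => ha0 (by simpa using (mem_m 1).mp h1), ?_⟩
    intro J x _hmJ hxm hxJ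
    obtain ⟨y, hy⟩ := (unit_of_not_mem x hxm).exists_right_inv
    rw [← hy]
    exact J.mul_mem_right y hxJ
  haveI := hm_max
  letI : Field (R ⧸ m) := Ideal.Quotient.field m
  set f : R →+* R ⧸ m := Ideal.Quotient.mk m with hf
  -- determinants of one-sided zero divisors lie in m
  have detm : ∀ M : Matrix (Fin n) (Fin n) R,
      (∃ W : Matrix (Fin n) (Fin n) R, W ≠ 0 ∧ (M * W = 0 ∨ W * M = 0)) → M.det ∈ m := by
    rintro M ⟨W, hW0, hW⟩
    obtain ⟨i, j, hij⟩ : ∃ i j, W i j ≠ 0 := by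
      by_contra hc
      push_neg at hc
      exact hW0 (by ext i j; simpa using hc i j)
    refine (mem_m _).mpr (haZ _ ⟨W i j, hij, ?_⟩)
    rcases hW with h1 | h1
    · have h2 : M.det • W = 0 := by
        calc M.det • W = (M.det • (1 : Matrix (Fin n) (Fin n) R)) * W := by
              rw [Matrix.smul_mul, Matrix.one_mul]
          _ = M.adjugate * (M * W) := by rw [← Matrix.mul_assoc, Matrix.adjugate_mul]
          _ = 0 := by rw [h1, Matrix.mul_zero]
      have := congrArg (fun Z : Matrix (Fin n) (Fin n) R => Z i j) h2
      simpa using this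
    · have h2 : M.det • W = 0 := by
        calc M.det • W = W * (M.det • (1 : Matrix (Fin n) (Fin n) R)) := by
              rw [Matrix.mul_smul, Matrix.mul_one]
          _ = (W * M) * M.adjugate := by rw [Matrix.mul_assoc, Matrix.mul_adjugate]
          _ = 0 := by rw [h1, Matrix.zero_mul]
      have := congrArg (fun Z : Matrix (Fin n) (Fin n) R => Z i j) h2
      simpa using this
  -- kernel vector for X
  have hdetX : (X.map f).det = 0 := by
    rw [← RingHom.mapMatrix_apply, ← RingHom.map_det]
    exact (Ideal.Quotient.eq_zero_iff_mem).mpr (detm X hX.2)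
  obtain ⟨ub, hub0, hubK⟩ := Matrix.exists_mulVec_eq_zero_iff.mpr hdetX
  -- kernel (left) vector for Y
  have hdetY : (Y.map f).det = 0 := by
    rw [← RingHom.mapMatrix_apply, ← RingHom.map_det]
    exact (Ideal.Quotient.eq_zero_iff_mem).mpr (detm Y hY.2)
  obtain ⟨vb, hvb0, hvbK⟩ := Matrix.exists_vecMul_eq_zero_iff.mpr hdetY
  -- lift to R
  obtain ⟨u, hu⟩ : ∃ u : Fin n → R, f ∘ u = ub := by
    choose u hu using fun i => Ideal.Quotient.mk_surjective (ub i)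
    exact ⟨u, funext hu⟩
  obtain ⟨v, hv⟩ : ∃ v : Fin n → R, f ∘ v = vb := by
    choose v hv using fun i => Ideal.Quotient.mk_surjective (vb i)
    exact ⟨v, funext hv⟩
  have hXu : ∀ i, a * (X *ᵥ u) i = 0 := by
    intro i
    refine (mem_m _).mp ?_
    rw [← Ideal.Quotient.eq_zero_iff_mem]
    have : f ((X *ᵥ u) i) = ((X.map f) *ᵥ (f ∘ u)) i := RingHom.map_mulVec f X u i
    rw [show (Ideal.Quotient.mk m) ((X *ᵥ u) i) = f ((X *ᵥ u) i) from rfl, this, hu, hubK]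
    rfl
  have hvY : ∀ j, a * (v ᵥ* Y) j = 0 := by
    intro j
    refine (mem_m _).mp ?_
    rw [← Ideal.Quotient.eq_zero_iff_mem]
    have : f ((v ᵥ* Y) j) = ((f ∘ v) ᵥ* (Y.map f)) j := RingHom.map_vecMul f Y v j
    rw [show (Ideal.Quotient.mk m) ((v ᵥ* Y) j) = f ((v ᵥ* Y) j) from rfl, this, hv, hvbK]
    rfl
  -- pick coordinates where the lifts are units
  obtain ⟨i₀, hi₀⟩ : ∃ i, ub i ≠ 0 := by
    by_contra hc; push_neg at hc; exact hub0 (funext hc)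
  obtain ⟨j₀, hj₀⟩ : ∃ j, vb j ≠ 0 := by
    by_contra hc; push_neg at hc; exact hvb0 (funext hc)
  have hui : u i₀ ∉ m := by
    rw [← Ideal.Quotient.eq_zero_iff_mem]
    have : (Ideal.Quotient.mk m) (u i₀) = ub i₀ := congrFun hu i₀
    rw [this]; exact hi₀
  have hvj : v j₀ ∉ m := by
    rw [← Ideal.Quotient.eq_zero_iff_mem]
    have : (Ideal.Quotient.mk m) (v j₀) = vb j₀ := congrFun hv j₀
    rw [this]; exact hj₀
  have hprod : u i₀ * v j₀ ∉ m := fun hmem =>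
    ((hm_max.isPrime.mem_or_mem hmem).elim hui hvj)
  -- the intermediate matrix
  refine ⟨Matrix.of (fun i j => a * (u i * v j)), ?_, ?_, ?_⟩
  · intro hZ
    have : a * (u i₀ * v j₀) = 0 := by
      have := congrFun (congrFun hZ i₀) j₀
      simpa using this
    exact hprod ((mem_m _).mpr this)
  · ext i j
    simp only [Matrix.mul_apply, Matrix.of_apply, Matrix.zero_apply]
    have : ∑ k, X i k * (a * (u k * v j)) = (a * (X *ᵥ u) i) * v j := by
      rw [Matrix.mulVec, dotProduct, Finset.mul_sum, Finset.sum_mul]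
      exact Finset.sum_congr rfl (fun k _ => by ring)
    rw [this, hXu i, zero_mul]
  · ext i j
    simp only [Matrix.mul_apply, Matrix.of_apply, Matrix.zero_apply]
    have : ∑ k, (a * (u i * v k)) * Y k j = u i * (a * (v ᵥ* Y) j) := by
      rw [Matrix.vecMul, dotProduct, Finset.mul_sum, Finset.mul_sum]
      exact Finset.sum_congr rfl (fun k _ => by ring)
    rw [this, hvY j, mul_zero]
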